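/- For every β > 0, the ratio K̃(2n)/K(n) converges, as n → ∞, to K(β) := (β+2)(β²+6β+12)·(7β²+9β+3+√(37β⁴+78β³+51β²+18β+9))² / ( 4(β+1)(β²+3β+3)·(4β²+9β+3+√(13β⁴+48β³+33β²−18β+9))² ), where K(n) is the condition number of the Fisher information matrix for the design ξ_n = {0, 1/n, …, 1} on [0,1] (n+1 points, step 1/n) and K̃(2n) is the condition number for the design ξ̃_{2n} = {0, 1/n, …, 2} on [0,2] (2n+1 points, step 1/n). -/

import Mathlib

open Real Filter

/-- Entry `L1` of the Fisher information matrix for an equidistant design with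
`n` points and step size `d`, covariance parameter `β`. -/
noncomputable def L1 (β : ℝ) (n : ℕ) (d : ℝ) : ℝ :=
  (2 - (n : ℝ) + n * exp (β * d)) / (exp (β * d) + 1)

/-- Entry `L2` of the Fisher information matrix. -/
noncomputable def L2 (β : ℝ) (n : ℕ) (d : ℝ) : ℝ :=
  d * ((n : ℝ) - 1) / 2 * L1 β n d

/-- Entry `L3` of the Fisher information matrix. -/
noncomputable def L3 (β : ℝ) (n : ℕ) (d : ℝ) : ℝ :=
  d ^ 2 * ((n : ℝ) - 1) / (exp (2 * β * d) - 1) *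
    ((n : ℝ) * (2 * n - 1) * (exp (β * d) - 1) ^ 2 / 6 + n * (exp (β * d) - 1) + 1)
/-- The quantity `R = (L1+L3)²/(L1·L3 − L2²)` for `n` points with step `d`. -/
noncomputable def Rquot (β : ℝ) (n : ℕ) (d : ℝ) : ℝ :=
  (L1 β n d + L3 β n d) ^ 2 / (L1 β n d * L3 β n d - L2 β n d ^ 2)

/-- The condition number of the 2×2 Fisher information matrix for `n` points
with step `d`: `(√R + √(R−4))²/4`. -/
noncomputable def Kcond (β : ℝ) (n : ℕ) (d : ℝ) : ℝ :=
  (Real.sqrt (Rquot β n d) + Real.sqrt (Rquot β n d - 4)) ^ 2 / 4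

/-- Condition number for the design `ξ_n = {0, 1/n, …, 1}` on `[0,1]`. -/
noncomputable def Kn (β : ℝ) (n : ℕ) : ℝ := Kcond β (n + 1) (1 / n)

/-- Condition number for the design `ξ̃_{2n} = {0, 1/n, …, 2}` on `[0,2]`. -/
noncomputable def Ktilde (β : ℝ) (n : ℕ) : ℝ := Kcond β (2 * n + 1) (1 / n)

set_option maxHeartbeats 1000000

/-- Doubling the design interval: `K̃(2n)/K(n) → K(β)` with the explicit
formula for `K(β)`. -/

theorem K_interval_double_ratio (β : ℝ) (hβ : 0 < β) :
    Tendsto (fun n : ℕ => Ktilde β n / Kn β n) atTop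
      (nhds ((β + 2) * (β ^ 2 + 6 * β + 12) *
          (7 * β ^ 2 + 9 * β + 3 +
            Real.sqrt (37 * β ^ 4 + 78 * β ^ 3 + 51 * β ^ 2 + 18 * β + 9)) ^ 2 /
        (4 * (β + 1) * (β ^ 2 + 3 * β + 3) *
          (4 * β ^ 2 + 9 * β + 3 +
            Real.sqrt (13 * β ^ 4 + 48 * β ^ 3 + 33 * β ^ 2 - 18 * β + 9)) ^ 2))) := by
  have hβ0 : β ≠ 0 := ne_of_gt hβ
  have hx : Tendsto (fun n : ℕ => (1:ℝ)/n) atTop (nhds 0) :=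
    tendsto_one_div_atTop_nhds_zero_nat
  have hu : Tendsto (fun n : ℕ => (n:ℝ) * (exp (β * (1/n)) - 1)) atTop (nhds β) := by
    have hderiv : HasDerivAt (fun x : ℝ => exp (β * x)) β 0 := by
      simpa [Function.comp_def] using ((Real.hasDerivAt_exp (β*0)).comp 0 ((hasDerivAt_id 0).const_mul β))
    have hslope := hasDerivAt_iff_tendsto_slope.mp hderiv
    have hx' : Tendsto (fun n : ℕ => (1:ℝ)/n) atTop (nhdsWithin 0 {(0:ℝ)}ᶜ) := by
      apply tendsto_nhdsWithin_of_tendsto_nhds_of_eventually_within _ hx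
      filter_upwards [eventually_ge_atTop 1] with n hn
      simp only [Set.mem_compl_iff, Set.mem_singleton_iff]
      positivity
    refine (hslope.comp hx').congr' ?_
    filter_upwards [eventually_ge_atTop 1] with n hn
    have hn0 : (n:ℝ) ≠ 0 := by positivity
    simp only [Function.comp_apply, slope_def_field]
    field_simp
    simp only [mul_zero, Real.exp_zero]; ring
  have hfacts : ∀ᶠ n : ℕ in atTop,
      (0:ℝ) < (n:ℝ) ∧ 0 < exp (β * (1/(n:ℝ))) - 1 ∧
        exp (2 * β * (1/(n:ℝ))) - 1 ≠ 0 ∧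
        exp (2 * β * (1/(n:ℝ))) = exp (β * (1/(n:ℝ))) * exp (β * (1/(n:ℝ))) := by
    filter_upwards [eventually_ge_atTop 1] with n hn
    have hnn : (0:ℝ) < n := by positivity
    refine ⟨hnn, ?_, ?_, ?_⟩
    · have : (1:ℝ) < exp (β * (1/(n:ℝ))) := by
        rw [show (1:ℝ) = exp 0 by simp]
        exact Real.exp_lt_exp.mpr (by positivity)
      linarith
    · have : (1:ℝ) < exp (2 * β * (1/(n:ℝ))) := by
        rw [show (1:ℝ) = exp 0 by simp]
        exact Real.exp_lt_exp.mpr (by positivity)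
      linarith
    · rw [← Real.exp_add]; ring_nf
  -- L1 limits
  have hL1a : Tendsto (fun n : ℕ => L1 β (n+1) (1/n)) atTop (nhds ((β+2)/2)) := by
    have h : Tendsto (fun n : ℕ =>
        (2 + (1 + 1/(n:ℝ)) * ((n:ℝ) * (exp (β * (1/n)) - 1))) /
          ((1/(n:ℝ)) * ((n:ℝ) * (exp (β * (1/n)) - 1)) + 2)) atTop
        (nhds ((2 + (1+0)*β) / (0*β + 2))) :=
      (tendsto_const_nhds.add ((tendsto_const_nhds.add hx).mul hu)).div
        ((hx.mul hu).add tendsto_const_nhds) (by norm_num)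
    rw [show ((2 + (1+0)*β) / (0*β + 2) : ℝ) = (β+2)/2 by ring] at h
    refine h.congr' ?_
    filter_upwards [hfacts] with n ⟨hnn, he1, hA, he2⟩
    have hn0 : (n:ℝ) ≠ 0 := ne_of_gt hnn
    have hd : (1/(n:ℝ)) * ((n:ℝ) * (exp (β * (1/n)) - 1)) + 2 = exp (β * (1/n)) + 1 := by
      field_simp; try ring
    rw [L1, hd]
    congr 1
    push_cast
    field_simp
    try ring
  have hL1b : Tendsto (fun n : ℕ => L1 β (2*n+1) (1/n)) atTop (nhds (β+1)) := by
    have h : Tendsto (fun n : ℕ =>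
        (2 + (2 + 1/(n:ℝ)) * ((n:ℝ) * (exp (β * (1/n)) - 1))) /
          ((1/(n:ℝ)) * ((n:ℝ) * (exp (β * (1/n)) - 1)) + 2)) atTop
        (nhds ((2 + (2+0)*β) / (0*β + 2))) :=
      (tendsto_const_nhds.add ((tendsto_const_nhds.add hx).mul hu)).div
        ((hx.mul hu).add tendsto_const_nhds) (by norm_num)
    rw [show ((2 + (2+0)*β) / (0*β + 2) : ℝ) = β+1 by ring] at h
    refine h.congr' ?_
    filter_upwards [hfacts] with n ⟨hnn, he1, hA, he2⟩
    have hn0 : (n:ℝ) ≠ 0 := ne_of_gt hnn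
    have hd : (1/(n:ℝ)) * ((n:ℝ) * (exp (β * (1/n)) - 1)) + 2 = exp (β * (1/n)) + 1 := by
      field_simp; try ring
    rw [L1, hd]
    congr 1
    push_cast
    field_simp
    try ring
  -- L2 limits
  have hL2a : Tendsto (fun n : ℕ => L2 β (n+1) (1/n)) atTop (nhds ((β+2)/4)) := by
    have h := hL1a.div_const 2
    rw [show ((β+2)/2/2 : ℝ) = (β+2)/4 by ring] at h
    refine h.congr' ?_
    filter_upwards [hfacts] with n ⟨hnn, _, _, _⟩
    have hn0 : (n:ℝ) ≠ 0 := ne_of_gt hnn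
    rw [L2]
    push_cast
    field_simp
    try ring
  have hL2b : Tendsto (fun n : ℕ => L2 β (2*n+1) (1/n)) atTop (nhds (β+1)) := by
    refine hL1b.congr' ?_
    filter_upwards [hfacts] with n ⟨hnn, _, _, _⟩
    have hn0 : (n:ℝ) ≠ 0 := ne_of_gt hnn
    rw [L2]
    push_cast
    field_simp
    try ring
  -- L3 limits
  have hL3a : Tendsto (fun n : ℕ => L3 β (n+1) (1/n)) atTop
      (nhds ((β^2+3*β+3)/(6*β))) := by
    have h : Tendsto (fun n : ℕ =>
        ((1 + 1/(n:ℝ)) * (2 + 1/(n:ℝ)) * ((n:ℝ) * (exp (β * (1/n)) - 1))^2 / 6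
          + (1 + 1/(n:ℝ)) * ((n:ℝ) * (exp (β * (1/n)) - 1)) + 1) /
        (((n:ℝ) * (exp (β * (1/n)) - 1)) *
          ((1/(n:ℝ)) * ((n:ℝ) * (exp (β * (1/n)) - 1)) + 2))) atTop
        (nhds (((1+0)*(2+0)*β^2/6 + (1+0)*β + 1) / (β * (0*β+2)))) := by
      refine Tendsto.div ?_ (hu.mul ((hx.mul hu).add tendsto_const_nhds)) (by
        simp only [zero_mul, zero_add]; positivity)
      exact ((((tendsto_const_nhds.add hx).mul (tendsto_const_nhds.add hx)).mul
        (hu.pow 2)).div_const 6).add ((tendsto_const_nhds.add hx).mul hu) |>.add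
        tendsto_const_nhds
    rw [show (((1+0)*(2+0)*β^2/6 + (1+0)*β + 1) / (β * (0*β+2)) : ℝ)
        = (β^2+3*β+3)/(6*β) by field_simp; ring] at h
    refine h.congr' ?_
    filter_upwards [hfacts] with n ⟨hnn, he1, hA, he2⟩
    have hn0 : (n:ℝ) ≠ 0 := ne_of_gt hnn
    have hB : ((n:ℝ) * (exp (β * (1/n)) - 1)) *
        ((1/(n:ℝ)) * ((n:ℝ) * (exp (β * (1/n)) - 1)) + 2) ≠ 0 := by
      have h2 : (0:ℝ) < (1/(n:ℝ)) * ((n:ℝ) * (exp (β * (1/n)) - 1)) + 2 := by positivity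
      positivity
    symm
    rw [L3, div_mul_eq_mul_div, div_eq_div_iff hA hB, he2]
    push_cast
    field_simp
    ring
  have hL3b : Tendsto (fun n : ℕ => L3 β (2*n+1) (1/n)) atTop
      (nhds ((4*β^2+6*β+3)/(3*β))) := by
    have h : Tendsto (fun n : ℕ =>
        (2 * ((2 + 1/(n:ℝ)) * (4 + 1/(n:ℝ)) * ((n:ℝ) * (exp (β * (1/n)) - 1))^2 / 6
          + (2 + 1/(n:ℝ)) * ((n:ℝ) * (exp (β * (1/n)) - 1)) + 1)) /
        (((n:ℝ) * (exp (β * (1/n)) - 1)) *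
          ((1/(n:ℝ)) * ((n:ℝ) * (exp (β * (1/n)) - 1)) + 2))) atTop
        (nhds ((2 * ((2+0)*(4+0)*β^2/6 + (2+0)*β + 1)) / (β * (0*β+2)))) := by
      refine Tendsto.div ?_ (hu.mul ((hx.mul hu).add tendsto_const_nhds)) (by
        simp only [zero_mul, zero_add]; positivity)
      exact Tendsto.const_mul 2 (((((tendsto_const_nhds.add hx).mul
        (tendsto_const_nhds.add hx)).mul (hu.pow 2)).div_const 6).add
        ((tendsto_const_nhds.add hx).mul hu) |>.add tendsto_const_nhds)
    rw [show ((2 * ((2+0)*(4+0)*β^2/6 + (2+0)*β + 1)) / (β * (0*β+2)) : ℝ)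
        = (4*β^2+6*β+3)/(3*β) by field_simp; ring] at h
    refine h.congr' ?_
    filter_upwards [hfacts] with n ⟨hnn, he1, hA, he2⟩
    have hn0 : (n:ℝ) ≠ 0 := ne_of_gt hnn
    have hB : ((n:ℝ) * (exp (β * (1/n)) - 1)) *
        ((1/(n:ℝ)) * ((n:ℝ) * (exp (β * (1/n)) - 1)) + 2) ≠ 0 := by
      have h2 : (0:ℝ) < (1/(n:ℝ)) * ((n:ℝ) * (exp (β * (1/n)) - 1)) + 2 := by positivity
      positivity
    symm
    rw [L3, div_mul_eq_mul_div, div_eq_div_iff hA hB, he2]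
    push_cast
    field_simp
    ring
  -- R limits
  have hR1 : Tendsto (fun n : ℕ => Rquot β (n+1) (1/n)) atTop
      (nhds (4*(4*β^2+9*β+3)^2 / (3*β*(β+2)*(β^2+6*β+12)))) := by
    have hden : ((β+2)/2) * ((β^2+3*β+3)/(6*β)) - ((β+2)/4)^2 ≠ 0 := by
      have : ((β+2)/2) * ((β^2+3*β+3)/(6*β)) - ((β+2)/4)^2
          = (β+2)*(β^2+6*β+12)/(48*β) := by field_simp; ring
      rw [this]; positivity
    have h := ((hL1a.add hL3a).pow 2).div ((hL1a.mul hL3a).sub (hL2a.pow 2)) hden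
    rw [show (((β+2)/2 + (β^2+3*β+3)/(6*β))^2 /
        (((β+2)/2) * ((β^2+3*β+3)/(6*β)) - ((β+2)/4)^2) : ℝ)
        = 4*(4*β^2+9*β+3)^2 / (3*β*(β+2)*(β^2+6*β+12)) by
      rw [div_eq_div_iff hden (by positivity)]; field_simp; ring] at h
    exact h.congr fun n => by simp only [Pi.div_apply, Rquot]
  have hR2 : Tendsto (fun n : ℕ => Rquot β (2*n+1) (1/n)) atTop
      (nhds ((7*β^2+9*β+3)^2 / (3*β*(β+1)*(β^2+3*β+3)))) := by
    have hden : (β+1) * ((4*β^2+6*β+3)/(3*β)) - (β+1)^2 ≠ 0 := by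
      have : (β+1) * ((4*β^2+6*β+3)/(3*β)) - (β+1)^2
          = (β+1)*(β^2+3*β+3)/(3*β) := by field_simp; ring
      rw [this]; positivity
    have h := ((hL1b.add hL3b).pow 2).div ((hL1b.mul hL3b).sub (hL2b.pow 2)) hden
    rw [show (((β+1) + (4*β^2+6*β+3)/(3*β))^2 /
        ((β+1) * ((4*β^2+6*β+3)/(3*β)) - (β+1)^2) : ℝ)
        = (7*β^2+9*β+3)^2 / (3*β*(β+1)*(β^2+3*β+3)) by
      rw [div_eq_div_iff hden (by positivity)]; field_simp; ring] at h
    exact h.congr fun n => by simp only [Pi.div_apply, Rquot]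
  -- abbreviations
  set E1 : ℝ := 13*β^4+48*β^3+33*β^2-18*β+9 with hE1def
  set E2 : ℝ := 37*β^4+78*β^3+51*β^2+18*β+9 with hE2def
  set D1 : ℝ := 3*β*(β+2)*(β^2+6*β+12) with hD1def
  set D2 : ℝ := 3*β*(β+1)*(β^2+3*β+3) with hD2def
  set N1 : ℝ := 4*β^2+9*β+3 with hN1def
  set N2 : ℝ := 7*β^2+9*β+3 with hN2def
  have hD1pos : 0 < D1 := by rw [hD1def]; positivity
  have hD2pos : 0 < D2 := by rw [hD2def]; positivity
  have hE1pos : 0 < E1 := by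
    rw [hE1def]; nlinarith [sq_nonneg (11*β-3), pow_pos hβ 3, pow_pos hβ 4, sq_nonneg β]
  have hE2pos : 0 < E2 := by rw [hE2def]; positivity
  have hN1pos : 0 < N1 := by rw [hN1def]; positivity
  have hN2pos : 0 < N2 := by rw [hN2def]; positivity
  have hs1 : Real.sqrt (4*N1^2 / D1) = 2*N1 / Real.sqrt D1 := by
    rw [show (4*N1^2 : ℝ) = (2*N1)^2 by ring, Real.sqrt_div (by positivity),
      Real.sqrt_sq (by positivity)]
  have hs2 : Real.sqrt (4*N1^2 / D1 - 4) = 2*Real.sqrt E1 / Real.sqrt D1 := by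
    have h4 : (4*N1^2 / D1 - 4 : ℝ) = 2^2*E1 / D1 := by
      rw [div_sub' hD1pos.ne', div_eq_div_iff hD1pos.ne' hD1pos.ne']
      rw [hN1def, hD1def, hE1def]; ring
    rw [h4, Real.sqrt_div (by positivity), Real.sqrt_mul (by norm_num : (0:ℝ) ≤ 2^2),
      Real.sqrt_sq (by norm_num)]
  have hs3 : Real.sqrt (N2^2 / D2) = N2 / Real.sqrt D2 := by
    rw [Real.sqrt_div (by positivity), Real.sqrt_sq hN2pos.le]
  have hs4 : Real.sqrt (N2^2 / D2 - 4) = Real.sqrt E2 / Real.sqrt D2 := by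
    have h4 : (N2^2 / D2 - 4 : ℝ) = E2 / D2 := by
      rw [div_sub' hD2pos.ne', div_eq_div_iff hD2pos.ne' hD2pos.ne']
      rw [hN2def, hD2def, hE2def]; ring
    rw [h4, Real.sqrt_div hE2pos.le]
  have hsqD1 : Real.sqrt D1 ^ 2 = D1 := Real.sq_sqrt hD1pos.le
  have hsqD2 : Real.sqrt D2 ^ 2 = D2 := Real.sq_sqrt hD2pos.le
  -- condition number limits
  have hK1 : Tendsto (fun n : ℕ => Kn β n) atTop
      (nhds ((N1 + Real.sqrt E1)^2 / D1)) := by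
    have h := ((hR1.sqrt.add (hR1.sub_const 4).sqrt).pow 2).div_const 4
    rw [show ((Real.sqrt (4*N1^2 / D1) + Real.sqrt (4*N1^2 / D1 - 4))^2 / 4 : ℝ)
        = (N1 + Real.sqrt E1)^2 / D1 by
      rw [hs1, hs2, ← add_div, div_pow, hsqD1]
      rw [div_div, div_eq_div_iff (by positivity) hD1pos.ne']; ring] at h
    exact h.congr fun n => by rw [Kn, Kcond]
  have hK2 : Tendsto (fun n : ℕ => Ktilde β n) atTop
      (nhds ((N2 + Real.sqrt E2)^2 / (4*D2))) := by
    have h := ((hR2.sqrt.add (hR2.sub_const 4).sqrt).pow 2).div_const 4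
    rw [show ((Real.sqrt (N2^2 / D2) + Real.sqrt (N2^2 / D2 - 4))^2 / 4 : ℝ)
        = (N2 + Real.sqrt E2)^2 / (4*D2) by
      rw [hs3, hs4, ← add_div, div_pow, hsqD2]
      rw [div_div, div_eq_div_iff (by positivity) (by positivity)]; ring] at h
    exact h.congr fun n => by rw [Ktilde, Kcond]
  have hP1 : (0:ℝ) < N1 + Real.sqrt E1 := by positivity
  have hP2 : (0:ℝ) < N2 + Real.sqrt E2 := by positivity
  have hK1ne : ((N1 + Real.sqrt E1)^2 / D1 : ℝ) ≠ 0 := by positivity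
  have hfin := hK2.div hK1 hK1ne
  have hval : ((N2 + Real.sqrt E2)^2 / (4*D2)) / ((N1 + Real.sqrt E1)^2 / D1)
      = (β + 2) * (β ^ 2 + 6 * β + 12) * (N2 + Real.sqrt E2) ^ 2 /
        (4 * (β + 1) * (β ^ 2 + 3 * β + 3) * (N1 + Real.sqrt E1) ^ 2) := by
    have h1 : (β:ℝ) + 1 ≠ 0 := by positivity
    have h2 : (β:ℝ)^2 + 3*β + 3 ≠ 0 := by positivity
    have h3 : (β:ℝ) + 2 ≠ 0 := by positivity
    have h4 : (β:ℝ)^2 + 6*β + 12 ≠ 0 := by positivity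
    rw [hD1def, hD2def]
    field_simp
  rw [hval] at hfin
  exact hfin
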